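/- For any two finitely supported probability distributions {y_i} and {z_i} on the same finite index set with z_i > 0 whenever y_i > 0, the total squared deviation is bounded by the KL divergence: ∑_i (y_i − z_i)² ≤ ∑_i y_i ln(y_i/z_i). -/

import Mathlib

lemma pade_lower {x : ℝ} (hx : 1 ≤ x) :
    3*(x^2-1)/(x^2+4*x+1) ≤ Real.log x := by
  have hder : ∀ t : ℝ, 0 < t →
      HasDerivAt (fun u : ℝ => Real.log u - 3*(u^2-1)/(u^2+4*u+1))
        (1/t - (6*t*(t^2+4*t+1) - 3*(t^2-1)*(2*t+4))/(t^2+4*t+1)^2) t := by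
    intro t ht
    have hd : t^2+4*t+1 ≠ 0 := by nlinarith
    have h1 : HasDerivAt Real.log (1/t) t := by
      simpa [one_div] using Real.hasDerivAt_log (ne_of_gt ht)
    have h2 : HasDerivAt (fun u : ℝ => 3*(u^2-1)) (6*t) t := by
      have := ((hasDerivAt_pow 2 t).sub_const 1).const_mul 3
      refine this.congr_deriv ?_; norm_num; ring
    have h3 : HasDerivAt (fun u : ℝ => u^2+4*u+1) (2*t+4) t := by
      have := (((hasDerivAt_pow 2 t).add ((hasDerivAt_id t).const_mul 4)).add_const 1)
      refine this.congr_deriv ?_; norm_num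
    exact h1.sub (h2.div h3 hd)
  have key : MonotoneOn (fun u : ℝ => Real.log u - 3*(u^2-1)/(u^2+4*u+1)) (Set.Ici 1) := by
    apply monotoneOn_of_deriv_nonneg (convex_Ici 1)
    · apply ContinuousOn.sub
      · intro u hu
        exact (Real.continuousAt_log (by simp at hu; linarith)).continuousWithinAt
      · apply ContinuousOn.div (by fun_prop) (by fun_prop)
        intro u hu
        simp only [Set.mem_Ici] at hu
        nlinarith
    · intro u hu
      rw [interior_Ici] at hu
      exact ((hder u (by simp at hu; linarith)).differentiableAt).differentiableWithinAt
    · intro u hu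
      rw [interior_Ici] at hu
      simp only [Set.mem_Ioi] at hu
      have hu0 : 0 < u := by linarith
      rw [(hder u hu0).deriv]
      have hd : (0:ℝ) < (u^2+4*u+1)^2 := by positivity
      rw [sub_nonneg, div_le_div_iff₀ hd (by linarith : (0:ℝ) < u)]
      nlinarith [sq_nonneg (u-1), sq_nonneg ((u-1)^2)]
  have h0 := key Set.self_mem_Ici hx hx
  simp only [Real.log_one] at h0
  norm_num at h0
  linarith

lemma pade_upper {x : ℝ} (hx : 1 ≤ x) :
    Real.log x ≤ (x-1)*(x+5)/(2*(2*x+1)) := by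
  have hder : ∀ t : ℝ, 0 < t →
      HasDerivAt (fun u : ℝ => (u-1)*(u+5)/(2*(2*u+1)) - Real.log u)
        (((2*t+4)*(2*(2*t+1)) - (t-1)*(t+5)*4)/(2*(2*t+1))^2 - 1/t) t := by
    intro t ht
    have hd : 2*(2*t+1) ≠ 0 := by nlinarith
    have h1 : HasDerivAt Real.log (1/t) t := by
      simpa [one_div] using Real.hasDerivAt_log (ne_of_gt ht)
    have h2 : HasDerivAt (fun u : ℝ => (u-1)*(u+5)) (2*t+4) t := by
      have := (((hasDerivAt_id t).sub_const 1).mul ((hasDerivAt_id t).add_const 5))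
      refine this.congr_deriv ?_; simp [id]; ring
    have h3 : HasDerivAt (fun u : ℝ => 2*(2*u+1)) (4) t := by
      have := (((hasDerivAt_id t).const_mul 2).add_const 1).const_mul 2
      refine this.congr_deriv ?_; ring
    exact (h2.div h3 hd).sub h1
  have key : MonotoneOn (fun u : ℝ => (u-1)*(u+5)/(2*(2*u+1)) - Real.log u) (Set.Ici 1) := by
    apply monotoneOn_of_deriv_nonneg (convex_Ici 1)
    · apply ContinuousOn.sub
      · apply ContinuousOn.div (by fun_prop) (by fun_prop)
        intro u hu
        simp only [Set.mem_Ici] at hu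
        nlinarith
      · intro u hu
        exact (Real.continuousAt_log (by simp at hu; linarith)).continuousWithinAt
    · intro u hu
      rw [interior_Ici] at hu
      exact ((hder u (by simp at hu; linarith)).differentiableAt).differentiableWithinAt
    · intro u hu
      rw [interior_Ici] at hu
      simp only [Set.mem_Ioi] at hu
      have hu0 : 0 < u := by linarith
      rw [(hder u hu0).deriv]
      have hd : (0:ℝ) < (2*(2*u+1))^2 := by positivity
      rw [sub_nonneg, div_le_div_iff₀ (by linarith : (0:ℝ) < u) hd]
      nlinarith [sq_nonneg (u-1), mul_pos (mul_pos hu0 hu0) hu0]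
  have h0 := key Set.self_mem_Ici hx hx
  simp only [Real.log_one] at h0
  norm_num at h0
  linarith


lemma pointwise_kl {a b : ℝ} (ha : 0 ≤ a) (hb : 0 ≤ b) (hab : 0 < a → 0 < b) :
    a - b + 3*(a-b)^2/(2*a+4*b) ≤ a * Real.log (a/b) := by
  rcases eq_or_lt_of_le ha with h | h
  · -- a = 0
    rcases eq_or_lt_of_le hb with h2 | h2
    · simp [← h, ← h2]
    · rw [← h]
      have : (0-b)^2 = b*b := by ring
      rw [this]
      rw [show (2*(0:ℝ)+4*b) = 4*b by ring]
      have : 3*(b*b)/(4*b) = 3*b/4 := by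
        field_simp
      simp only [zero_sub, zero_mul, zero_div, mul_zero]
      rw [this]
      linarith
  · have hb' : 0 < b := hab h
    rcases le_total b a with hba | hba
    · -- b ≤ a : use lower Padé with x = a/b ≥ 1
      have hx : 1 ≤ a/b := (one_le_div hb').2 hba
      have hl := pade_lower hx
      have heq : 3*((a/b)^2-1)/((a/b)^2+4*(a/b)+1) = 3*(a^2-b^2)/(a^2+4*a*b+b^2) := by
        rw [div_eq_div_iff (by positivity) (by positivity)]
        field_simp
      rw [heq] at hl
      have step1 : a * (3*(a^2-b^2)/(a^2+4*a*b+b^2)) ≤ a * Real.log (a/b) :=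
        mul_le_mul_of_nonneg_left hl ha
      refine le_trans ?_ step1
      have e2 : (0:ℝ) < a^2+4*a*b+b^2 := by positivity
      have e1 : (0:ℝ) < 2*a+4*b := by linarith
      have key1 : a * (3*(a^2-b^2)/(a^2+4*a*b+b^2)) - (a - b)
          = (a-b)^2*(2*a+b)/(a^2+4*a*b+b^2) := by
        field_simp
        ring
      have key2 : 3*(a-b)^2/(2*a+4*b) ≤ (a-b)^2*(2*a+b)/(a^2+4*a*b+b^2) := by
        rw [div_le_div_iff₀ e1 e2]
        nlinarith [sq_nonneg (a-b), sq_nonneg ((a-b)*(a-b))]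
      linarith
    · -- a ≤ b : use upper Padé with x = b/a ≥ 1
      have hx : 1 ≤ b/a := (one_le_div h).2 hba
      have hu := pade_upper hx
      have hlog : Real.log (a/b) = - Real.log (b/a) := by
        rw [← Real.log_inv]
        congr 1
        rw [inv_div]
      have step1 : a * (-( (b/a-1)*(b/a+5)/(2*(2*(b/a)+1)))) ≤ a * Real.log (a/b) := by
        rw [hlog]
        apply mul_le_mul_of_nonneg_left _ ha
        linarith
      refine le_trans ?_ step1
      have heq : a * (-((b/a-1)*(b/a+5)/(2*(2*(b/a)+1)))) = -((b-a)*(b+5*a))/(2*(2*b+a)) := by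
        field_simp
      rw [heq]
      have : a - b + 3*(a-b)^2/(2*a+4*b) = -((b-a)*(b+5*a))/(2*(2*b+a)) := by
        field_simp
        ring
      linarith [this.le]


/-- entropy inequality: for finitely supported probability
distributions `y`, `z` on the same finite index set with `z i > 0` whenever
`y i > 0`, `∑ i (y i − z i)² ≤ ∑ i y i · ln(y i / z i)`.
(In Lean, `Real.log 0 = 0`, so the terms with `y i = 0` vanish, matching the
convention `0·ln(0/z) = 0`.) -/
theorem entropy_inequality {ι : Type*} [Fintype ι] (y z : ι → ℝ)
    (hy : ∀ i, 0 ≤ y i) (hz : ∀ i, 0 ≤ z i)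
    (hys : ∑ i, y i = 1) (hzs : ∑ i, z i = 1)
    (hpos : ∀ i, 0 < y i → 0 < z i) :
    ∑ i, (y i - z i) ^ 2 ≤ ∑ i, y i * Real.log (y i / z i) := by
  classical
  set d : ι → ℝ := fun i => |y i - z i| with hd
  set S : ℝ := ∑ i, d i with hS
  set q : ι → ℝ := fun i => 3*(y i - z i)^2/(2*y i+4*z i) with hq
  have hdnn : ∀ i, 0 ≤ d i := fun i => abs_nonneg _
  have hSnn : 0 ≤ S := Finset.sum_nonneg fun i _ => hdnn i
  have hqnn : ∀ i, 0 ≤ q i := fun i => by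
    apply div_nonneg (by positivity)
    have := hy i; have := hz i; linarith
  -- each deviation is at most half the total variation
  have hhalf : ∀ i, d i ≤ S/2 := by
    intro i
    have hsum0 : ∑ j, (y j - z j) = 0 := by
      rw [Finset.sum_sub_distrib, hys, hzs]; ring
    have hi := Finset.add_sum_erase Finset.univ (fun j => y j - z j) (Finset.mem_univ i)
    simp only [hsum0] at hi
    have h1 : d i ≤ ∑ j ∈ Finset.univ.erase i, d j := by
      have he : y i - z i = -∑ j ∈ Finset.univ.erase i, (y j - z j) := by
        linarith
      calc d i = |∑ j ∈ Finset.univ.erase i, (y j - z j)| := by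
            show |y i - z i| = _
            rw [he, abs_neg]
        _ ≤ ∑ j ∈ Finset.univ.erase i, d j := Finset.abs_sum_le_sum_abs _ _
    have h3 := Finset.add_sum_erase Finset.univ d (Finset.mem_univ i)
    rw [← hS] at h3
    linarith
  -- ℓ2² ≤ S²/2
  have step3 : ∑ i, (y i - z i)^2 ≤ S * (S/2) := by
    calc ∑ i, (y i - z i)^2 = ∑ i, d i * d i := by
          apply Finset.sum_congr rfl
          intro i _
          show (y i - z i)^2 = |y i - z i| * |y i - z i|
          rw [abs_mul_abs_self]; ring
      _ ≤ ∑ i, d i * (S/2) := by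
          apply Finset.sum_le_sum
          intro i _
          exact mul_le_mul_of_nonneg_left (hhalf i) (hdnn i)
      _ = S * (S/2) := by rw [← Finset.sum_mul]
  -- Cauchy–Schwarz: S² ≤ (∑ q) * 2
  have step2 : S^2 ≤ (∑ i, q i) * 2 := by
    have hw : ∀ i ∈ Finset.univ, (0:ℝ) ≤ (2*y i+4*z i)/3 := fun i _ => by
      have := hy i; have := hz i; linarith
    have hsq : ∀ i ∈ Finset.univ, d i ^ 2 = q i * ((2*y i+4*z i)/3) := by
      intro i _
      rcases eq_or_lt_of_le (by have := hy i; have := hz i; linarith :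
          (0:ℝ) ≤ 2*y i+4*z i) with h0 | h0
      · have hyi : y i = 0 := by have := hy i; have := hz i; linarith
        have hzi : z i = 0 := by have := hy i; have := hz i; linarith
        simp [hd, hq, hyi, hzi]
      · simp only [hd, hq, sq_abs]
        field_simp
        rw [mul_div_assoc, div_self (by linarith), mul_one]
    have := Finset.sum_sq_le_sum_mul_sum_of_sq_eq_mul Finset.univ
      (fun i _ => hqnn i) hw hsq
    have hwsum : ∑ i, (2*y i+4*z i)/3 = 2 := by
      rw [← Finset.sum_div, Finset.sum_add_distrib, ← Finset.mul_sum, ← Finset.mul_sum,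
        hys, hzs]
      norm_num
    rw [hwsum] at this
    exact this
  -- KL step
  have step1 : ∑ i, q i ≤ ∑ i, y i * Real.log (y i / z i) := by
    have h := Finset.sum_le_sum (fun i (_ : i ∈ Finset.univ) =>
      pointwise_kl (hy i) (hz i) (hpos i))
    have : ∑ i, (y i - z i + q i) = ∑ i, q i := by
      rw [Finset.sum_add_distrib, Finset.sum_sub_distrib, hys, hzs]; ring
    calc ∑ i, q i = ∑ i, (y i - z i + q i) := this.symm
      _ ≤ ∑ i, y i * Real.log (y i / z i) := h
  nlinarith [step1, step2, step3]
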